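/- Let P be a d-dimensional convex polytope, let h ∈ ℝ^d be a fixed vector such that every line with direction vector h meets ∂P in finitely many points, and let P^h be the half-open counterpart of P. If P^h k-tiles ℝ^d with a discrete multiset Λ, then ∑_{λ∈Λ} 1_{P^h+λ}(v) = k for all v ∈ ℝ^d (with no exceptional set). -/

import Mathlib

open Set Pointwise

noncomputable section

abbrev Euc (d : ℕ) : Type := EuclideanSpace ℝ (Fin d)

/-- A "discrete multiset" of vectors: a multiplicity function with locally finite support. -/
def IsDiscreteMultiset {d : ℕ} (m : Euc d → ℕ) : Prop :=
  ∀ x : Euc d, ∃ U ∈ nhds x, {y : Euc d | y ∈ U ∧ m y ≠ 0}.Finite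

/-- `∑_{λ∈Λ} 1_{P+λ}(v)`, counted with multiplicity. -/
def coverCount {d : ℕ} (m : Euc d → ℕ) (P : Set (Euc d)) (v : Euc d) : ℕ :=
  ∑ᶠ l : Euc d, m l * P.indicator 1 (v - l)

/-- The set `∂P + Λ`. -/
def boundarySum {d : ℕ} (P : Set (Euc d)) (m : Euc d → ℕ) : Set (Euc d) :=
  {x : Euc d | ∃ l : Euc d, m l ≠ 0 ∧ x - l ∈ frontier P}

/-- `P` `k`-tiles `ℝ^d` with the discrete multiset `m`: every point not in `∂P + Λ`
is covered exactly `k` times. -/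
def Tiles {d : ℕ} (P : Set (Euc d)) (m : Euc d → ℕ) (k : ℕ) : Prop :=
  ∀ v : Euc d, v ∉ boundarySum P m → coverCount m P v = k

/-- A lattice in ℝ^d: a discrete additive subgroup of full rank, viewed as a set. -/
def IsLattice {d : ℕ} (L : Set (Euc d)) : Prop :=
  ∃ H : AddSubgroup (Euc d), L = (H : Set (Euc d)) ∧
    DiscreteTopology H ∧ Submodule.span ℝ (H : Set (Euc d)) = ⊤

/-- A set viewed as a multiset with all multiplicities one. -/
def setMult {d : ℕ} (L : Set (Euc d)) : Euc d → ℕ := L.indicator 1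

/-- A convex polytope: convex hull of a finite set of points, with nonempty interior. -/
def IsConvexPolytope {d : ℕ} (P : Set (Euc d)) : Prop :=
  (∃ S : Set (Euc d), S.Finite ∧ P = convexHull ℝ S) ∧ (interior P).Nonempty

/-- The half-open counterpart `P^h` of `P` with respect to the direction `h`. -/
def halfOpen {d : ℕ} (P : Set (Euc d)) (h : Euc d) : Set (Euc d) :=
  {v : Euc d | v ∈ closure P ∧
    ∃ ε : ℝ, 0 < ε ∧ ∀ c : ℝ, 0 < c → c < ε → v + c • h ∈ interior P}

/-- Every line with direction `h` meets `∂P` in finitely many points. -/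
def GoodDirection {d : ℕ} (P : Set (Euc d)) (h : Euc d) : Prop :=
  ∀ x : Euc d, {c : ℝ | x + c • h ∈ frontier P}.Finite

/-- `P^h` `k`-tiles `ℝ^d` with the discrete multiset `m`. -/
def TilesHalfOpen {d : ℕ} (P : Set (Euc d)) (h : Euc d) (m : Euc d → ℕ) (k : ℕ) : Prop :=
  ∀ v : Euc d, v ∉ boundarySum P m → coverCount m (halfOpen P h) v = k

/-- `L_Λ(v) = #(Λ ∩ (−1·P + v))`, counted with multiplicity. -/
def LEnum {d : ℕ} (m : Euc d → ℕ) (P : Set (Euc d)) (v : Euc d) : ℕ :=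
  ∑ᶠ l : Euc d, m l * Set.indicator (v +ᵥ ((-1 : ℝ) • P)) 1 l

/-- `L^h_Λ(v) = #(Λ ∩ (−1·P^h + v))`, counted with multiplicity. -/
def LEnumH {d : ℕ} (m : Euc d → ℕ) (P : Set (Euc d)) (h : Euc d) (v : Euc d) : ℕ :=
  LEnum m (halfOpen P h) v

open Filter Topology in
lemma finite_support_inter_compact {d : ℕ} {m : Euc d → ℕ} (hm : IsDiscreteMultiset m)
    {K : Set (Euc d)} (hK : IsCompact K) : {y | y ∈ K ∧ m y ≠ 0}.Finite := by
  choose U hU hfin using hm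
  obtain ⟨t, _, hcov⟩ := hK.elim_nhds_subcover U (fun x _ => hU x)
  refine Set.Finite.subset (t.finite_toSet.biUnion fun x _ => hfin x) ?_
  rintro y ⟨hyK, hy⟩
  obtain ⟨x, hx, hyU⟩ := Set.mem_iUnion₂.1 (hcov hyK)
  exact Set.mem_biUnion hx ⟨hyU, hy⟩

lemma interval_entry {S : Set ℝ} (hconv : Convex ℝ S) (hopen : IsOpen S)
    {c ε : ℝ} (hc : 0 < c) (hε : 0 < ε) (hsub : Set.Ioo c (c + ε) ⊆ S)
    (hnot : ¬ ∃ δ > 0, Set.Ioo 0 δ ⊆ S) :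
    ∃ a, 0 < a ∧ a ≤ c ∧ a ∈ closure S ∧ a ∉ S := by
  have hOC := hconv.ordConnected
  have hs0S : c + ε / 2 ∈ S := hsub ⟨by linarith, by linarith⟩
  have hs0pos : 0 < c + ε / 2 := by positivity
  set A := S ∩ Set.Ioi (0 : ℝ) with hA
  have hAne : A.Nonempty := ⟨c + ε / 2, hs0S, hs0pos⟩
  have hAbdd : BddBelow A := ⟨0, fun x hx => hx.2.le⟩
  set a := sInf A with ha
  have haclA : a ∈ closure A := csInf_mem_closure hAne hAbdd
  have haclS : a ∈ closure S := closure_mono Set.inter_subset_left haclA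
  have ha0 : 0 ≤ a := le_csInf hAne fun x hx => hx.2.le
  have hac : a ≤ c := by
    refine le_of_forall_pos_le_add fun δ hδ => ?_
    have h1 : 0 < min δ ε := lt_min hδ hε
    have h2 : min δ ε ≤ ε := min_le_right _ _
    have h3 : min δ ε ≤ δ := min_le_left _ _
    have ht : c + min δ ε / 2 ∈ A :=
      ⟨hsub ⟨by linarith, by linarith⟩, by simp only [Set.mem_Ioi]; linarith⟩
    calc a ≤ c + min δ ε / 2 := csInf_le hAbdd ht
      _ ≤ c + δ := by linarith
  have haS : a ∉ S := by
    intro haS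
    obtain ⟨δ, hδ, hball⟩ := Metric.isOpen_iff.1 hopen a haS
    rw [Real.ball_eq_Ioo] at hball
    rcases eq_or_lt_of_le ha0 with h0 | h0
    · exact hnot ⟨c + ε / 2, hs0pos, fun x hx =>
        hOC.out haS hs0S ⟨h0 ▸ hx.1.le, hx.2.le⟩⟩
    · set t := max (a - δ / 2) (a / 2) with htdef
      have ht1 : a - δ < t := lt_of_lt_of_le (by linarith) (le_max_left _ _)
      have ht2 : t < a := max_lt (by linarith) (by linarith)
      have htpos : 0 < t := lt_of_lt_of_le (by linarith) (le_max_right _ _)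
      have htA : t ∈ A := ⟨hball ⟨ht1, by linarith⟩, htpos⟩
      exact absurd (csInf_le hAbdd htA) (not_le.2 ht2)
  have hapos : 0 < a := by
    rcases eq_or_lt_of_le ha0 with h0 | h0
    · exfalso
      apply hnot
      refine ⟨c + ε / 2, hs0pos, fun x hx => ?_⟩
      obtain ⟨t, htA, htx⟩ := exists_lt_of_csInf_lt hAne (by rw [← ha, ← h0]; exact hx.1)
      exact hOC.out htA.1 hs0S ⟨htx.le, hx.2.le⟩
    · exact h0
  exact ⟨a, hapos, hac, haclS, haS⟩

/-- If `P^h` `k`-tiles ℝ^d with a discrete multiset Λ, then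
`∑_{λ∈Λ} 1_{P^h+λ}(v) = k` for every `v ∈ ℝ^d`, with no exceptional set. -/
theorem stmt_4 {d : ℕ} (P : Set (Euc d)) (hP : IsConvexPolytope P)
    (h : Euc d) (hdir : GoodDirection P h)
    (k : ℕ) (hk : 0 < k) (Λ : Euc d → ℕ) (hΛ : IsDiscreteMultiset Λ)
    (hTile : TilesHalfOpen P h Λ k) :
    ∀ v : Euc d, coverCount Λ (halfOpen P h) v = k := by
  classical
  intro v
  obtain ⟨⟨S0, hS0fin, hPS⟩, hPint⟩ := hP
  have hPconv : Convex ℝ P := by rw [hPS]; exact convex_convexHull ℝ S0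
  have hPcomp : IsCompact P := by rw [hPS]; exact hS0fin.isCompact_convexHull ℝ
  have hclP : closure P = P := hPcomp.isClosed.closure_eq
  obtain ⟨R, hR⟩ := hPcomp.isBounded.subset_closedBall 0
  have hQconv : Convex ℝ (interior P) := hPconv.interior
  -- characterization of half-open membership
  have hmemPh : ∀ x : Euc d, x ∈ halfOpen P h ↔
      ∃ ε : ℝ, 0 < ε ∧ ∀ t : ℝ, 0 < t → t < ε → x + t • h ∈ interior P := by
    intro x
    constructor
    · rintro ⟨-, ε, hε, hx⟩; exact ⟨ε, hε, hx⟩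
    · rintro ⟨ε, hε, hx⟩
      refine ⟨?_, ε, hε, hx⟩
      have hcont : Continuous fun t : ℝ => x + t • h :=
        continuous_const.add (continuous_id.smul continuous_const)
      have htend : Filter.Tendsto (fun t : ℝ => x + t • h) (nhdsWithin 0 (Set.Ioi 0)) (nhds x) := by
        have h1 : Filter.Tendsto (fun t : ℝ => x + t • h) (nhds 0) (nhds x) := by
          simpa using hcont.tendsto 0
        exact h1.mono_left nhdsWithin_le_nhds
      refine closure_mono interior_subset (mem_closure_of_tendsto htend ?_)
      filter_upwards [Ioo_mem_nhdsGT_of_mem (Set.left_mem_Ico.2 hε)] with t ht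
      exact hx t ht.1 ht.2
  have hPh_sub : halfOpen P h ⊆ P := fun x hx => hclP ▸ hx.1
  -- the in-ball lemma
  have hball : ∀ (c : ℝ) (l : Euc d), 0 ≤ c → c ≤ 1 → v + c • h - l ∈ P →
      l ∈ Metric.closedBall v (‖h‖ + R) := by
    intro c l hc0 hc1 hp
    rw [Metric.mem_closedBall, dist_eq_norm]
    have heq : l - v = c • h - (v + c • h - l) := by abel
    rw [heq]
    have h2 : ‖v + c • h - l‖ ≤ R := mem_closedBall_zero_iff.1 (hR hp)
    have h3 : ‖c • h‖ = c * ‖h‖ := by rw [norm_smul, Real.norm_of_nonneg hc0]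
    calc ‖c • h - (v + c • h - l)‖ ≤ ‖c • h‖ + ‖v + c • h - l‖ := norm_sub_le _ _
      _ ≤ ‖h‖ + R := by nlinarith [norm_nonneg h]
  -- the finite set of relevant translates
  set F : Set (Euc d) := {l | l ∈ Metric.closedBall v (‖h‖ + R) ∧ Λ l ≠ 0} with hF
  have hFfin : F.Finite :=
    finite_support_inter_compact hΛ (isCompact_closedBall v (‖h‖ + R))
  -- the finite boundary-hit sets
  set Z : Euc d → Set ℝ := fun l => {t : ℝ | v + t • h - l ∈ frontier P} with hZ
  have hZfin : ∀ l, (Z l).Finite := by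
    intro l
    have := hdir (v - l)
    have heq : ∀ t : ℝ, v - l + t • h = v + t • h - l := fun t => by abel
    simpa [hZ, heq] using this
  -- choice of epsilons
  have hechoice : ∀ l : Euc d, ∃ e : ℝ, 0 < e ∧
      (v - l ∈ halfOpen P h → ∀ t : ℝ, 0 < t → t < e → (v - l) + t • h ∈ interior P) := by
    intro l
    by_cases hm : v - l ∈ halfOpen P h
    · obtain ⟨ε, hε, hp⟩ := (hmemPh _).1 hm
      exact ⟨ε, hε, fun _ => hp⟩
    · exact ⟨1, one_pos, fun hc => absurd hc hm⟩
  choose e he0 heP using hechoice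
  -- the finite set of thresholds
  set B : Set ℝ := insert 1 ((⋃ l ∈ F, (Z l ∩ Set.Ioi 0)) ∪ (e '' F)) with hB
  have hBfin : B.Finite :=
    ((hFfin.biUnion fun l _ => ((hZfin l).inter_of_left _)).union (hFfin.image e)).insert 1
  have hBpos : ∀ b ∈ B, 0 < b := by
    rintro b hb
    rcases Set.mem_insert_iff.1 hb with rfl | hb
    · exact one_pos
    rcases hb with hb | ⟨l, _, rfl⟩
    · obtain ⟨l, _, _, hb2⟩ := Set.mem_iUnion₂.1 hb
      exact hb2
    · exact he0 l
  -- choose c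
  obtain ⟨c, hc0, hcB⟩ : ∃ c : ℝ, 0 < c ∧ ∀ b ∈ B, c < b := by
    have h1B : (1 : ℝ) ∈ B := Set.mem_insert _ _
    have htne : hBfin.toFinset.Nonempty := ⟨1, hBfin.mem_toFinset.2 h1B⟩
    set m := hBfin.toFinset.min' htne with hm
    have hmB : m ∈ B := hBfin.mem_toFinset.1 (hBfin.toFinset.min'_mem htne)
    have hm0 : 0 < m := hBpos m hmB
    refine ⟨m / 2, by positivity, fun b hb => lt_of_lt_of_le (by linarith)
      (hBfin.toFinset.min'_le b (hBfin.mem_toFinset.2 hb))⟩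
  have hc1 : c < 1 := hcB 1 (Set.mem_insert _ _)
  set w := v + c • h with hw
  -- w avoids the boundary sum
  have hwB : w ∉ boundarySum P Λ := by
    rintro ⟨l, hl0, hlf⟩
    have hlP : w - l ∈ P := hclP ▸ frontier_subset_closure hlf
    have hlF : l ∈ F := ⟨hball c l hc0.le hc1.le hlP, hl0⟩
    have hcZ : c ∈ Z l ∩ Set.Ioi 0 := ⟨hlf, hc0⟩
    have : c ∈ B := Set.mem_insert_of_mem _ (Or.inl (Set.mem_biUnion hlF hcZ))
    exact absurd (hcB c this) (lt_irrefl c)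
  -- convexity/openness of the line-parameter sets
  have hSconv : ∀ x : Euc d, Convex ℝ {t : ℝ | x + t • h ∈ interior P} := by
    intro x t1 ht1 t2 ht2 a b ha hb hab
    have hmem := hQconv ht1 ht2 ha hb hab
    simp only [Set.mem_setOf_eq, smul_eq_mul] at *
    have heq : x + (a * t1 + b * t2) • h = a • (x + t1 • h) + b • (x + t2 • h) := by
      rw [show b = 1 - a by linarith]
      module
    rw [heq]; exact hmem
  have hSopen : ∀ x : Euc d, IsOpen {t : ℝ | x + t • h ∈ interior P} :=
    fun x => isOpen_interior.preimage (continuous_const.add (continuous_id.smul continuous_const))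
  -- termwise equality of the cover counts at v and w
  have hterm : ∀ l : Euc d,
      Λ l * (halfOpen P h).indicator 1 (v - l) = Λ l * (halfOpen P h).indicator 1 (w - l) := by
    intro l
    rcases eq_or_ne (Λ l) 0 with h0 | h0
    · simp [h0]
    congr 1
    by_cases hlF : l ∈ F
    · by_cases hmem : v - l ∈ halfOpen P h
      · have hecl : c < e l := hcB (e l) (Set.mem_insert_of_mem _ (Or.inr ⟨l, hlF, rfl⟩))
        have hww : w - l ∈ halfOpen P h := by
          rw [hmemPh]
          refine ⟨e l - c, by linarith, fun t ht1 ht2 => ?_⟩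
          have hkey := heP l hmem (c + t) (by linarith) (by linarith)
          have heq : w - l + t • h = v - l + (c + t) • h := by rw [hw, add_smul]; abel
          rw [heq]; exact hkey
        simp [hmem, hww]
      · have hww : w - l ∉ halfOpen P h := by
          intro hww
          obtain ⟨ε, hε, hp⟩ := (hmemPh _).1 hww
          have hsub : Set.Ioo c (c + ε) ⊆ {t : ℝ | (v - l) + t • h ∈ interior P} := by
            intro x hx
            have hkey := hp (x - c) (by linarith [hx.1]) (by linarith [hx.2])
            have heq : v - l + x • h = w - l + (x - c) • h := by rw [hw, sub_smul]; abel
            simp only [Set.mem_setOf_eq, heq]; exact hkey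
          have hnot : ¬ ∃ δ > 0, Set.Ioo 0 δ ⊆ {t : ℝ | (v - l) + t • h ∈ interior P} := by
            rintro ⟨δ, hδ, hδsub⟩
            exact hmem ((hmemPh _).2 ⟨δ, hδ, fun t ht1 ht2 => hδsub ⟨ht1, ht2⟩⟩)
          obtain ⟨a, ha0, hac, hacl, haS⟩ :=
            interval_entry (hSconv (v - l)) (hSopen (v - l)) hc0 hε hsub hnot
          have hfr : v - l + a • h ∈ frontier P := by
            constructor
            · have hmapsTo : Set.MapsTo (fun t : ℝ => v - l + t • h)
                  {t : ℝ | v - l + t • h ∈ interior P} (interior P) := fun t ht => ht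
              have hmap : v - l + a • h ∈ closure (interior P) :=
                hmapsTo.closure
                  (continuous_const.add (continuous_id.smul continuous_const)) hacl
              exact closure_mono interior_subset hmap
            · exact haS
          have haZ : a ∈ Z l ∩ Set.Ioi 0 := by
            refine ⟨?_, ha0⟩
            show v + a • h - l ∈ frontier P
            have heq : v + a • h - l = v - l + a • h := by abel
            rw [heq]; exact hfr
          have : a ∈ B := Set.mem_insert_of_mem _ (Or.inl (Set.mem_biUnion hlF haZ))
          exact absurd (hcB a this) (not_lt.2 hac)
        simp [hmem, hww]
    · have h1 : v - l ∉ halfOpen P h := by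
        intro hx
        refine hlF ⟨hball 0 l le_rfl zero_le_one ?_, h0⟩
        simpa using hPh_sub hx
      have h2 : w - l ∉ halfOpen P h := by
        intro hx
        exact hlF ⟨hball c l hc0.le hc1.le (hPh_sub hx), h0⟩
      simp [h1, h2]
  calc coverCount Λ (halfOpen P h) v = coverCount Λ (halfOpen P h) w := finsum_congr hterm
    _ = k := hTile w hwB
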